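/- arXiv:1103.3026 — 2 statements merged into one kernel-verified Lean document; each statement's English description precedes it below -/
import Mathlib

section
/- Let A be an n × n real matrix partitioned into an N × N block matrix with square diagonal blocks A_{ii} of size b_i × b_i, and let t = (t_1; …; t_N) be a vector of size n partitioned conformally. Suppose blocks C̄_{ij} (for 1 ≤ i, j ≤ N) are given satisfying: C̄_{ij} = A_{ij} whenever i = 1 or j = 1, and otherwise C̄_{ij} = A_{ij} − Σ_{k=1}^{min(i,j)−1} L̄_{ik} F̄_{kj} Ū_{kj}, where L̄_{ik} = C̄_{ik} for i > k, Ū_{kj} = C̄_{kj} for k < j, the diagonal blocks D̄_{kk} = C̄_{kk} are invertible, and each F̄_{kj} is a b_k × b_k matrix satisfying the filtering condition F̄_{kj} (Ū_{kj} t_j) = D̄_{kk}^{-1} (Ū_{kj} t_j). Let M = (L̄ + D̄) D̄^{-1} (Ū + D̄), where L̄ is the strictly block lower triangular part, Ū the strictly block upper triangular part, and D̄ the block diagonal part formed by the C̄_{ij}. Then M satisfies the right filtering property M t = A t. -/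
open Matrix

/-- The `(i,j)` block of a matrix partitioned into an `N × N` block structure with
diagonal blocks of sizes `b 0, …, b (N-1)`. -/
def blk {N : ℕ} {b : Fin N → ℕ}
    (A : Matrix ((k : Fin N) × Fin (b k)) ((k : Fin N) × Fin (b k)) ℝ)
    (i j : Fin N) : Matrix (Fin (b i)) (Fin (b j)) ℝ :=
  Matrix.of fun x y => A ⟨i, x⟩ ⟨j, y⟩

lemma blk_mulVec {N : ℕ} {b : Fin N → ℕ}
    (B : Matrix ((k : Fin N) × Fin (b k)) ((k : Fin N) × Fin (b k)) ℝ)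
    (v : ((k : Fin N) × Fin (b k)) → ℝ) (i : Fin N) (x : Fin (b i)) :
    (B *ᵥ v) ⟨i, x⟩ = ∑ j : Fin N, ((blk B i j) *ᵥ fun y => v ⟨j, y⟩) x := by
  simp only [blk, Matrix.mulVec, dotProduct, Matrix.of_apply]
  rw [Finset.sum_sigma', Finset.univ_sigma_univ]

lemma blk_add {N : ℕ} {b : Fin N → ℕ}
    (X Y : Matrix ((k : Fin N) × Fin (b k)) ((k : Fin N) × Fin (b k)) ℝ)
    (i j : Fin N) : blk (X + Y) i j = blk X i j + blk Y i j := rfl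

lemma blk_blockDiagonal'_eq {N : ℕ} {b : Fin N → ℕ}
    (d : ∀ k : Fin N, Matrix (Fin (b k)) (Fin (b k)) ℝ) (k : Fin N) :
    blk (blockDiagonal' d) k k = d k := by
  ext x y; simp [blk, Matrix.blockDiagonal'_apply_eq]

lemma blk_blockDiagonal'_ne {N : ℕ} {b : Fin N → ℕ}
    (d : ∀ k : Fin N, Matrix (Fin (b k)) (Fin (b k)) ℝ) {i j : Fin N} (h : i ≠ j) :
    blk (blockDiagonal' d) i j = 0 := by
  ext x y; simp [blk, Matrix.blockDiagonal'_apply_ne d _ _ h]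

lemma blockDiagonal'_mulVec_apply {N : ℕ} {b : Fin N → ℕ}
    (d : ∀ k : Fin N, Matrix (Fin (b k)) (Fin (b k)) ℝ)
    (v : ((k : Fin N) × Fin (b k)) → ℝ) (k : Fin N) (x : Fin (b k)) :
    (blockDiagonal' d *ᵥ v) ⟨k, x⟩ = (d k *ᵥ fun y => v ⟨k, y⟩) x := by
  rw [blk_mulVec]
  rw [Finset.sum_eq_single k]
  · rw [blk_blockDiagonal'_eq]
  · intro j _ hj
    rw [blk_blockDiagonal'_ne d (Ne.symm hj), Matrix.zero_mulVec]; rfl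
  · simp

lemma myMulVec_sum {m n : Type*} [Fintype n] {ι : Type*} (s : Finset ι)
    (A : Matrix m n ℝ) (f : ι → n → ℝ) :
    A *ᵥ (∑ i ∈ s, f i) = ∑ i ∈ s, A *ᵥ f i := by
  simp only [← Matrix.mulVecLin_apply]
  exact map_sum (Matrix.mulVecLin A) f s

lemma mySum_mulVec {m n : Type*} [Fintype n] {ι : Type*} (s : Finset ι)
    (f : ι → Matrix m n ℝ) (v : n → ℝ) :
    (∑ i ∈ s, f i) *ᵥ v = ∑ i ∈ s, f i *ᵥ v := by
  funext x
  simp only [Matrix.mulVec, dotProduct, Matrix.sum_apply, Finset.sum_mul]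
  rw [Finset.sum_comm]
  simp [Matrix.mulVec, dotProduct, Finset.sum_apply]

lemma tri_split {N : ℕ} (i : Fin N) (f : Fin N → ℝ) :
    ∑ j, f j = (∑ j ∈ Finset.univ.filter (· < i), f j) + f i
      + ∑ j ∈ Finset.univ.filter (i < ·), f j := by
  have h : (Finset.univ.filter (fun j : Fin N => ¬ j < i))
      = insert i (Finset.univ.filter (fun j => i < j)) := by
    ext j
    simp [not_lt, le_iff_lt_or_eq, eq_comm, or_comm]
  rw [← Finset.sum_filter_add_sum_filter_not Finset.univ (· < i), h,
    Finset.sum_insert (by simp)]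
  ring

/-- The block filtering preconditioner `M = (L̄ + D̄) D̄⁻¹ (Ū + D̄)`, built from blocks
`C̄ᵢⱼ = Aᵢⱼ` if `i` or `j` is the first index and
`C̄ᵢⱼ = Aᵢⱼ - Σ_{k < min(i,j)} L̄ᵢₖ F̄ₖⱼ Ūₖⱼ` otherwise, where each `F̄ₖⱼ` satisfies the
filtering condition `F̄ₖⱼ (Ūₖⱼ tⱼ) = D̄ₖₖ⁻¹ (Ūₖⱼ tⱼ)`, satisfies `M t = A t`. -/
theorem block_filtering_decomposition {N : ℕ} {b : Fin N → ℕ}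
    (A : Matrix ((k : Fin N) × Fin (b k)) ((k : Fin N) × Fin (b k)) ℝ)
    (t : ((k : Fin N) × Fin (b k)) → ℝ)
    (C : ∀ i j : Fin N, Matrix (Fin (b i)) (Fin (b j)) ℝ)
    (F : ∀ k j : Fin N, Matrix (Fin (b k)) (Fin (b k)) ℝ)
    (hD : ∀ k : Fin N, IsUnit (C k k))
    (hC1 : ∀ i j : Fin N, i.1 = 0 ∨ j.1 = 0 → C i j = blk A i j)
    (hC2 : ∀ i j : Fin N, i.1 ≠ 0 → j.1 ≠ 0 →
      C i j = blk A i j -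
        ∑ k ∈ Finset.univ.filter (fun k : Fin N => k < i ∧ k < j),
          C i k * F k j * C k j)
    (hF : ∀ k j : Fin N, k < j →
      (F k j) *ᵥ ((C k j) *ᵥ fun y => t ⟨j, y⟩) =
        (C k k)⁻¹ *ᵥ ((C k j) *ᵥ fun y => t ⟨j, y⟩))
    (L U M : Matrix ((k : Fin N) × Fin (b k)) ((k : Fin N) × Fin (b k)) ℝ)
    (hL : ∀ i j : Fin N, j < i → blk L i j = C i j)
    (hL0 : ∀ i j : Fin N, ¬ j < i → blk L i j = 0)
    (hU : ∀ i j : Fin N, i < j → blk U i j = C i j)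
    (hU0 : ∀ i j : Fin N, ¬ i < j → blk U i j = 0)
    (hM : M = (L + blockDiagonal' (fun k => C k k)) *
        blockDiagonal' (fun k => (C k k)⁻¹) *
        (U + blockDiagonal' (fun k => C k k))) :
    M *ᵥ t = A *ᵥ t := by
  -- notation
  set tb : ∀ j : Fin N, Fin (b j) → ℝ := fun j y => t ⟨j, y⟩ with htb
  have hdet : ∀ k : Fin N, IsUnit (C k k).det := fun k =>
    (Matrix.isUnit_iff_isUnit_det _).mp (hD k)
  -- uniform formula for blocks of A
  have hC : ∀ i j : Fin N, blk A i j = C i j +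
      ∑ k ∈ Finset.univ.filter (fun k : Fin N => k < i ∧ k < j),
        C i k * F k j * C k j := by
    intro i j
    by_cases hi : i.1 = 0
    · have : (Finset.univ.filter (fun k : Fin N => k < i ∧ k < j)) = ∅ := by
        apply Finset.filter_false_of_mem
        intro k _ hk
        exact absurd hk.1 (by simp [Fin.lt_def, hi])
      rw [this, Finset.sum_empty, add_zero, hC1 i j (Or.inl hi)]
    · by_cases hj : j.1 = 0
      · have : (Finset.univ.filter (fun k : Fin N => k < i ∧ k < j)) = ∅ := by
          apply Finset.filter_false_of_mem
          intro k _ hk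
          exact absurd hk.2 (by simp [Fin.lt_def, hj])
        rw [this, Finset.sum_empty, add_zero, hC1 i j (Or.inr hj)]
      · rw [hC2 i j hi hj]; abel
  subst hM
  funext p
  obtain ⟨i, x⟩ := p
  rw [← Matrix.mulVec_mulVec, ← Matrix.mulVec_mulVec]
  set s : ((k : Fin N) × Fin (b k)) → ℝ :=
    (U + blockDiagonal' fun k => C k k) *ᵥ t with hsdef
  set w : ((k : Fin N) × Fin (b k)) → ℝ :=
    blockDiagonal' (fun k => (C k k)⁻¹) *ᵥ s with hwdef
  -- blocks of s
  have hs : ∀ j : Fin N, (fun y => s ⟨j, y⟩)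
      = (∑ j' ∈ Finset.univ.filter (fun j' => j < j'), C j j' *ᵥ tb j')
        + C j j *ᵥ tb j := by
    intro j
    funext y
    rw [hsdef, blk_mulVec, tri_split j]
    have h1 : ∀ j' ∈ Finset.univ.filter (fun j' => j < j'),
        ((blk (U + blockDiagonal' fun k => C k k) j j') *ᵥ fun y => t ⟨j', y⟩) y
          = (C j j' *ᵥ tb j') y := by
      intro j' hj'
      simp only [Finset.mem_filter] at hj'
      rw [blk_add, hU j j' hj'.2, blk_blockDiagonal'_ne _ (ne_of_lt hj'.2), add_zero]
    have h2 : ∀ j' ∈ Finset.univ.filter (· < j),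
        ((blk (U + blockDiagonal' fun k => C k k) j j') *ᵥ fun y => t ⟨j', y⟩) y
          = 0 := by
      intro j' hj'
      simp only [Finset.mem_filter] at hj'
      rw [blk_add, hU0 j j' (not_lt_of_gt hj'.2),
        blk_blockDiagonal'_ne _ (ne_of_gt hj'.2), add_zero, Matrix.zero_mulVec]
      rfl
    rw [Finset.sum_congr rfl h1, Finset.sum_congr rfl h2, Finset.sum_const_zero,
      blk_add, hU0 j j (lt_irrefl j), blk_blockDiagonal'_eq, zero_add]
    simp [Finset.sum_apply]
    ring
  -- blocks of w
  have hw : ∀ k : Fin N, (fun z => w ⟨k, z⟩)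
      = (∑ j ∈ Finset.univ.filter (fun j => k < j),
          F k j *ᵥ (C k j *ᵥ tb j)) + tb k := by
    intro k
    have e1 : (fun z => w ⟨k, z⟩) = (C k k)⁻¹ *ᵥ fun y => s ⟨k, y⟩ := by
      funext z; rw [hwdef, blockDiagonal'_mulVec_apply]
    rw [e1, hs k, Matrix.mulVec_add, myMulVec_sum]
    congr 1
    · apply Finset.sum_congr rfl
      intro j hj
      simp only [Finset.mem_filter] at hj
      exact (hF k j hj.2).symm
    · rw [Matrix.mulVec_mulVec, Matrix.nonsing_inv_mul _ (hdet k), Matrix.one_mulVec]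
  -- now compute both sides
  rw [blk_mulVec, blk_mulVec, tri_split i]
  -- the diagonal-block term of L+D against w
  have hdiag : ((blk (L + blockDiagonal' fun k => C k k) i i) *ᵥ fun y => w ⟨i, y⟩) x
      = (fun y => s ⟨i, y⟩) x := by
    rw [blk_add, hL0 i i (lt_irrefl i), zero_add, blk_blockDiagonal'_eq]
    have : (fun y => w ⟨i, y⟩) = (C i i)⁻¹ *ᵥ fun y => s ⟨i, y⟩ := by
      funext z; rw [hwdef, blockDiagonal'_mulVec_apply]
    rw [this, Matrix.mulVec_mulVec, Matrix.mul_nonsing_inv _ (hdet i), Matrix.one_mulVec]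
  have hlow : ∀ k ∈ Finset.univ.filter (· < i),
      ((blk (L + blockDiagonal' fun k => C k k) i k) *ᵥ fun y => w ⟨k, y⟩) x
        = (∑ j ∈ Finset.univ.filter (fun j => k < j),
            C i k *ᵥ (F k j *ᵥ (C k j *ᵥ tb j))) x + (C i k *ᵥ tb k) x := by
    intro k hk
    simp only [Finset.mem_filter] at hk
    rw [blk_add, hL i k hk.2, blk_blockDiagonal'_ne _ (ne_of_gt hk.2), add_zero,
      hw k, Matrix.mulVec_add, myMulVec_sum]
    simp [Finset.sum_apply]
  have hupp : ∀ j ∈ Finset.univ.filter (i < ·),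
      ((blk (L + blockDiagonal' fun k => C k k) i j) *ᵥ fun y => w ⟨j, y⟩) x = 0 := by
    intro j hj
    simp only [Finset.mem_filter] at hj
    rw [blk_add, hL0 i j (not_lt_of_gt hj.2), blk_blockDiagonal'_ne _ (ne_of_lt hj.2),
      add_zero, Matrix.zero_mulVec]
    rfl
  rw [Finset.sum_congr rfl hlow, Finset.sum_congr rfl hupp, Finset.sum_const_zero,
    add_zero, hdiag, hs i]
  -- RHS
  have hrhs : ∀ j : Fin N, ((blk A i j) *ᵥ tb j) x
      = (C i j *ᵥ tb j) x
        + ∑ k ∈ Finset.univ.filter (fun k : Fin N => k < i ∧ k < j),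
            (C i k *ᵥ (F k j *ᵥ (C k j *ᵥ tb j))) x := by
    intro j
    rw [hC i j, Matrix.add_mulVec, mySum_mulVec]
    simp only [Pi.add_apply, Finset.sum_apply]
    congr 1
    apply Finset.sum_congr rfl
    intro k _
    rw [← Matrix.mulVec_mulVec, ← Matrix.mulVec_mulVec]

  -- combinatorial swap
  have hswap : ∑ k ∈ Finset.univ.filter (· < i),
      ∑ j ∈ Finset.univ.filter (fun j => k < j),
        (C i k *ᵥ (F k j *ᵥ (C k j *ᵥ tb j))) x
      = ∑ j : Fin N, ∑ k ∈ Finset.univ.filter (fun k : Fin N => k < i ∧ k < j),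
          (C i k *ᵥ (F k j *ᵥ (C k j *ᵥ tb j))) x := by
    simp only [Finset.sum_filter]
    have step : ∀ k : Fin N, (if k < i then
          ∑ j : Fin N, if k < j then (C i k *ᵥ (F k j *ᵥ (C k j *ᵥ tb j))) x else 0 else 0)
        = ∑ j : Fin N, if k < i ∧ k < j then (C i k *ᵥ (F k j *ᵥ (C k j *ᵥ tb j))) x else 0 := by
      intro k
      by_cases h : k < i <;> simp [h]
    rw [Finset.sum_congr rfl fun k _ => step k, Finset.sum_comm]
  -- finish
  conv_rhs => rw [Finset.sum_congr rfl (fun j _ => hrhs j), Finset.sum_add_distrib]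
  simp only [Finset.sum_apply, Pi.add_apply]
  rw [← hswap, tri_split i (fun j => (C i j *ᵥ tb j) x), Finset.sum_add_distrib]
  ring
end

section
/- Let A be an n × n real matrix partitioned into an N × N block matrix with square diagonal blocks A_{ii} of size b_i × b_i, and let t = (t_1; …; t_N) be a vector of size n partitioned conformally. Suppose blocks C̄_{ij} (for 1 ≤ i, j ≤ N) are given satisfying: C̄_{ij} = A_{ij} whenever i = 1 or j = 1, and otherwise C̄_{ij} = A_{ij} − Σ_{k=1}^{min(i,j)−1} L̄_{ik} (2 F̄_{kj} − F̄_{kj} D̄_{kk} F̄_{kj}) Ū_{kj}, where L̄_{ik} = C̄_{ik} for i > k, Ū_{kj} = C̄_{kj} for k < j, the diagonal blocks D̄_{kk} = C̄_{kk} are invertible, and each F̄_{kj} is a b_k × b_k matrix satisfying the filtering condition F̄_{kj} (Ū_{kj} t_j) = D̄_{kk}^{-1} (Ū_{kj} t_j). Let M = (L̄ + D̄) D̄^{-1} (Ū + D̄), where L̄ is the strictly block lower triangular part, Ū the strictly block upper triangular part, and D̄ the block diagonal part formed by the C̄_{ij}. Then M satisfies the right filtering property M t = A t. -/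
open Matrix

private lemma mulVec_sum' {m n ι : Type*} [Fintype n] (s : Finset ι)
    (A : Matrix m n ℝ) (f : ι → n → ℝ) :
    A *ᵥ (∑ j ∈ s, f j) = ∑ j ∈ s, A *ᵥ f j := by
  funext x
  simp only [Matrix.mulVec, dotProduct, Finset.sum_apply, Finset.mul_sum]
  exact Finset.sum_comm

private lemma sum_mulVec' {m n ι : Type*} [Fintype n] (s : Finset ι)
    (M : ι → Matrix m n ℝ) (v : n → ℝ) :
    (∑ k ∈ s, M k) *ᵥ v = ∑ k ∈ s, M k *ᵥ v := by
  funext x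
  simp only [Matrix.mulVec, dotProduct, Finset.sum_apply, Matrix.sum_apply,
    Finset.sum_mul]
  exact Finset.sum_comm

/-- The block filtering preconditioner `M = (L̄ + D̄) D̄⁻¹ (Ū + D̄)` built from blocks
`C̄ᵢⱼ = Aᵢⱼ` if `i` or `j` is the first index and
`C̄ᵢⱼ = Aᵢⱼ - Σ_{k < min(i,j)} L̄ᵢₖ (2F̄ₖⱼ - F̄ₖⱼ D̄ₖₖ F̄ₖⱼ) Ūₖⱼ` otherwise, where each
`F̄ₖⱼ` satisfies the filtering condition `F̄ₖⱼ (Ūₖⱼ tⱼ) = D̄ₖₖ⁻¹ (Ūₖⱼ tⱼ)`,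
satisfies `M t = A t`. -/
theorem block_filtering_decomposition_second_order {N : ℕ} {b : Fin N → ℕ}
    (A : Matrix ((k : Fin N) × Fin (b k)) ((k : Fin N) × Fin (b k)) ℝ)
    (t : ((k : Fin N) × Fin (b k)) → ℝ)
    (C : ∀ i j : Fin N, Matrix (Fin (b i)) (Fin (b j)) ℝ)
    (F : ∀ k j : Fin N, Matrix (Fin (b k)) (Fin (b k)) ℝ)
    (hD : ∀ k : Fin N, IsUnit (C k k))
    (hC1 : ∀ i j : Fin N, i.1 = 0 ∨ j.1 = 0 → C i j = blk A i j)
    (hC2 : ∀ i j : Fin N, i.1 ≠ 0 → j.1 ≠ 0 →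
      C i j = blk A i j -
        ∑ k ∈ Finset.univ.filter (fun k : Fin N => k < i ∧ k < j),
          C i k * (2 * F k j - F k j * C k k * F k j) * C k j)
    (hF : ∀ k j : Fin N, k < j →
      (F k j) *ᵥ ((C k j) *ᵥ fun y => t ⟨j, y⟩) =
        (C k k)⁻¹ *ᵥ ((C k j) *ᵥ fun y => t ⟨j, y⟩))
    (L U M : Matrix ((k : Fin N) × Fin (b k)) ((k : Fin N) × Fin (b k)) ℝ)
    (hL : ∀ i j : Fin N, j < i → blk L i j = C i j)
    (hL0 : ∀ i j : Fin N, ¬ j < i → blk L i j = 0)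
    (hU : ∀ i j : Fin N, i < j → blk U i j = C i j)
    (hU0 : ∀ i j : Fin N, ¬ i < j → blk U i j = 0)
    (hM : M = (L + blockDiagonal' (fun k => C k k)) *
        blockDiagonal' (fun k => (C k k)⁻¹) *
        (U + blockDiagonal' (fun k => C k k))) :
    M *ᵥ t = A *ᵥ t := by
  classical
  have hdet : ∀ k : Fin N, IsUnit (C k k).det :=
    fun k => (Matrix.isUnit_iff_isUnit_det _).mp (hD k)
  -- block decomposition of matrix-vector products
  have key : ∀ (P : Matrix ((k : Fin N) × Fin (b k)) ((k : Fin N) × Fin (b k)) ℝ)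
      (v : ((k : Fin N) × Fin (b k)) → ℝ) (i : Fin N) (x : Fin (b i)),
      (P *ᵥ v) ⟨i, x⟩ = ∑ j : Fin N, (blk P i j *ᵥ fun y => v ⟨j, y⟩) x := by
    intro P v i x
    simp only [Matrix.mulVec, dotProduct, blk, Matrix.of_apply]
    rw [← Finset.univ_sigma_univ, Finset.sum_sigma]
  -- blocks of the block diagonal matrices
  have hblkD : ∀ (f : ∀ k : Fin N, Matrix (Fin (b k)) (Fin (b k)) ℝ) (k : Fin N),
      blk (blockDiagonal' f) k k = f k := by
    intro f k; ext x y; simp [blk]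
  have hblkD0 : ∀ (f : ∀ k : Fin N, Matrix (Fin (b k)) (Fin (b k)) ℝ) (k j : Fin N),
      k ≠ j → blk (blockDiagonal' f) k j = 0 := by
    intro f k j h; ext x y
    simp [blk, Matrix.blockDiagonal'_apply_ne f x y h]
  -- the filtering identity
  have hfilter : ∀ (i k j : Fin N), k < j →
      (C i k * (2 * F k j - F k j * C k k * F k j) * C k j) *ᵥ (fun y => t ⟨j, y⟩)
        = C i k *ᵥ ((C k k)⁻¹ *ᵥ (C k j *ᵥ fun y => t ⟨j, y⟩)) := by
    intro i k j hkj
    have hv := hF k j hkj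
    have h2 : (F k j * C k k * F k j) *ᵥ (C k j *ᵥ fun y => t ⟨j, y⟩)
        = (C k k)⁻¹ *ᵥ (C k j *ᵥ fun y => t ⟨j, y⟩) :=
      calc (F k j * C k k * F k j) *ᵥ (C k j *ᵥ fun y => t ⟨j, y⟩)
          = (F k j * C k k) *ᵥ (F k j *ᵥ (C k j *ᵥ fun y => t ⟨j, y⟩)) :=
            (Matrix.mulVec_mulVec _ _ _).symm
        _ = (F k j * C k k) *ᵥ ((C k k)⁻¹ *ᵥ (C k j *ᵥ fun y => t ⟨j, y⟩)) := by rw [hv]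
        _ = (F k j * C k k * (C k k)⁻¹) *ᵥ (C k j *ᵥ fun y => t ⟨j, y⟩) :=
            Matrix.mulVec_mulVec _ _ _
        _ = F k j *ᵥ (C k j *ᵥ fun y => t ⟨j, y⟩) := by
            rw [mul_assoc, Matrix.mul_nonsing_inv _ (hdet k), mul_one]
        _ = (C k k)⁻¹ *ᵥ (C k j *ᵥ fun y => t ⟨j, y⟩) := hv
    have h3 : (2 * F k j) *ᵥ (C k j *ᵥ fun y => t ⟨j, y⟩)
        = (C k k)⁻¹ *ᵥ (C k j *ᵥ fun y => t ⟨j, y⟩)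
          + (C k k)⁻¹ *ᵥ (C k j *ᵥ fun y => t ⟨j, y⟩) := by
      rw [two_mul, Matrix.add_mulVec, hv]
    have hX : (2 * F k j - F k j * C k k * F k j) *ᵥ (C k j *ᵥ fun y => t ⟨j, y⟩)
        = (C k k)⁻¹ *ᵥ (C k j *ᵥ fun y => t ⟨j, y⟩) := by
      rw [Matrix.sub_mulVec, h2, h3]
      abel
    calc (C i k * (2 * F k j - F k j * C k k * F k j) * C k j) *ᵥ (fun y => t ⟨j, y⟩)
        = (C i k * (2 * F k j - F k j * C k k * F k j)) *ᵥ
            (C k j *ᵥ fun y => t ⟨j, y⟩) := (Matrix.mulVec_mulVec _ _ _).symm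
      _ = C i k *ᵥ ((2 * F k j - F k j * C k k * F k j) *ᵥ
            (C k j *ᵥ fun y => t ⟨j, y⟩)) := (Matrix.mulVec_mulVec _ _ _).symm
      _ = C i k *ᵥ ((C k k)⁻¹ *ᵥ (C k j *ᵥ fun y => t ⟨j, y⟩)) := by rw [hX]
  -- uniform formula for the blocks of A
  have hA : ∀ i j : Fin N, blk A i j = C i j +
      ∑ k ∈ Finset.univ.filter (fun k : Fin N => k < i ∧ k < j),
        C i k * (2 * F k j - F k j * C k k * F k j) * C k j := by
    intro i j
    by_cases hi : i.1 = 0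
    · have he : Finset.univ.filter (fun k : Fin N => k < i ∧ k < j) = ∅ :=
        Finset.filter_eq_empty_iff.mpr (by
          intro k _
          simp only [not_and]
          intro hk
          exact absurd hk (by simp [Fin.lt_def, hi]))
      rw [he, Finset.sum_empty, add_zero, hC1 i j (Or.inl hi)]
    by_cases hj : j.1 = 0
    · have he : Finset.univ.filter (fun k : Fin N => k < i ∧ k < j) = ∅ :=
        Finset.filter_eq_empty_iff.mpr (by
          intro k _
          simp only [not_and]
          intro _ hk
          exact absurd hk (by simp [Fin.lt_def, hj]))
      rw [he, Finset.sum_empty, add_zero, hC1 i j (Or.inr hj)]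
    · rw [hC2 i j hi hj, sub_add_cancel]
  -- computation of the blocks of (A *ᵥ t)
  have hAt : ∀ (i : Fin N) (x : Fin (b i)), (A *ᵥ t) ⟨i, x⟩ =
      (∑ j : Fin N, (C i j *ᵥ fun y => t ⟨j, y⟩) x) +
      ∑ j : Fin N, ∑ k ∈ Finset.univ.filter (fun k : Fin N => k < i ∧ k < j),
          (C i k *ᵥ ((C k k)⁻¹ *ᵥ (C k j *ᵥ fun y => t ⟨j, y⟩))) x := by
    intro i x
    rw [key, ← Finset.sum_add_distrib]
    refine Finset.sum_congr rfl (fun j _ => ?_)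
    rw [hA i j, Matrix.add_mulVec, Pi.add_apply]
    congr 1
    rw [sum_mulVec', Finset.sum_apply]
    refine Finset.sum_congr rfl (fun k hk => ?_)
    rw [hfilter i k j (Finset.mem_filter.mp hk).2.2]
  -- now the M side
  set Dm := blockDiagonal' (fun k => C k k) with hDm
  set Di := blockDiagonal' (fun k => (C k k)⁻¹) with hDi
  set u := (U + Dm) *ᵥ t with hu
  set w := Di *ᵥ u with hw
  have hub : ∀ k : Fin N, (fun y => u ⟨k, y⟩) =
      (C k k *ᵥ fun y => t ⟨k, y⟩) +
        ∑ j ∈ Finset.univ.filter (fun j : Fin N => k < j), C k j *ᵥ (fun y => t ⟨j, y⟩) := by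
    intro k
    funext y
    rw [hu, key]
    have hsplit : ∀ j : Fin N, blk (U + Dm) k j = blk U k j + blk Dm k j := fun j => rfl
    simp only [hsplit, Matrix.add_mulVec, Pi.add_apply, Finset.sum_add_distrib]
    rw [Finset.sum_apply]
    conv_lhs => rw [add_comm]
    congr 1
    · -- diagonal part
      rw [Finset.sum_eq_single k]
      · rw [hblkD]
      · intro j _ hj
        rw [hblkD0 _ k j (Ne.symm hj), Matrix.zero_mulVec]
        rfl
      · intro h; exact absurd (Finset.mem_univ k) h
    · -- strictly upper part
      rw [← Finset.sum_filter_of_ne (p := fun j : Fin N => k < j)]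
      · refine Finset.sum_congr rfl (fun j hj => ?_)
        rw [hU k j (Finset.mem_filter.mp hj).2]
      · intro j _ hne
        by_contra hkj
        rw [hU0 k j hkj, Matrix.zero_mulVec] at hne
        exact hne rfl
  have hwb : ∀ k : Fin N, (fun y => w ⟨k, y⟩) = (C k k)⁻¹ *ᵥ (fun y => u ⟨k, y⟩) := by
    intro k
    funext y
    rw [hw, key]
    rw [Finset.sum_eq_single k]
    · rw [hDi, hblkD]
    · intro j _ hj
      rw [hDi, hblkD0 _ k j (Ne.symm hj), Matrix.zero_mulVec]
      rfl
    · intro h; exact absurd (Finset.mem_univ k) h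
  have hwb2 : ∀ k : Fin N, (fun y => w ⟨k, y⟩) = (fun y => t ⟨k, y⟩) +
      ∑ j ∈ Finset.univ.filter (fun j : Fin N => k < j),
        (C k k)⁻¹ *ᵥ (C k j *ᵥ fun y => t ⟨j, y⟩) := by
    intro k
    rw [hwb k, hub k, Matrix.mulVec_add, Matrix.mulVec_mulVec,
      Matrix.nonsing_inv_mul _ (hdet k), Matrix.one_mulVec, mulVec_sum']
  -- blocks of (M *ᵥ t)
  have hMt : ∀ (i : Fin N) (x : Fin (b i)), (M *ᵥ t) ⟨i, x⟩ =
      (∑ j : Fin N, (C i j *ᵥ fun y => t ⟨j, y⟩) x) +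
      ∑ k ∈ Finset.univ.filter (fun k : Fin N => k < i),
        ∑ j ∈ Finset.univ.filter (fun j : Fin N => k < j),
          (C i k *ᵥ ((C k k)⁻¹ *ᵥ (C k j *ᵥ fun y => t ⟨j, y⟩))) x := by
    intro i x
    have hM' : M *ᵥ t = (L + Dm) *ᵥ w := by
      rw [hM, hw, hu, Matrix.mulVec_mulVec, Matrix.mulVec_mulVec]
    rw [hM', key]
    have hsplit : ∀ k : Fin N, blk (L + Dm) i k = blk L i k + blk Dm i k := fun k => rfl
    simp only [hsplit, Matrix.add_mulVec, Pi.add_apply, Finset.sum_add_distrib]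
    -- diagonal part of (L + Dm)
    have hdiag : (∑ k : Fin N, (blk Dm i k *ᵥ fun y => w ⟨k, y⟩) x)
        = (C i i *ᵥ fun y => t ⟨i, y⟩) x
          + ∑ j ∈ Finset.univ.filter (fun j : Fin N => i < j),
              (C i j *ᵥ fun y => t ⟨j, y⟩) x := by
      rw [Finset.sum_eq_single i]
      · rw [hDm, hblkD, hwb2 i, Matrix.mulVec_add, mulVec_sum', Pi.add_apply,
          Finset.sum_apply]
        congr 1
        refine Finset.sum_congr rfl (fun j _ => ?_)
        rw [Matrix.mulVec_mulVec, Matrix.mulVec_mulVec,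
          Matrix.mul_nonsing_inv _ (hdet i), Matrix.one_mul]
      · intro k _ hk
        rw [hDm, hblkD0 _ i k (Ne.symm hk), Matrix.zero_mulVec]
        rfl
      · intro h; exact absurd (Finset.mem_univ i) h
    -- strictly lower part
    have hlow : (∑ k : Fin N, (blk L i k *ᵥ fun y => w ⟨k, y⟩) x)
        = (∑ k ∈ Finset.univ.filter (fun k : Fin N => k < i),
            (C i k *ᵥ fun y => t ⟨k, y⟩) x)
          + ∑ k ∈ Finset.univ.filter (fun k : Fin N => k < i),
              ∑ j ∈ Finset.univ.filter (fun j : Fin N => k < j),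
                (C i k *ᵥ ((C k k)⁻¹ *ᵥ (C k j *ᵥ fun y => t ⟨j, y⟩))) x := by
      rw [← Finset.sum_add_distrib, ← Finset.sum_filter_of_ne (p := fun k : Fin N => k < i)]
      · refine Finset.sum_congr rfl (fun k hk => ?_)
        rw [hL i k (Finset.mem_filter.mp hk).2, hwb2 k, Matrix.mulVec_add, mulVec_sum',
          Pi.add_apply, Finset.sum_apply]
      · intro k _ hne
        by_contra hki
        rw [hL0 i k hki, Matrix.zero_mulVec] at hne
        exact hne rfl
    rw [hdiag, hlow]
    -- regroup: C i i + lower + upper = full sum over j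
    have hpart : (∑ j : Fin N, (C i j *ᵥ fun y => t ⟨j, y⟩) x)
        = (∑ k ∈ Finset.univ.filter (fun k : Fin N => k < i),
            (C i k *ᵥ fun y => t ⟨k, y⟩) x)
          + ((C i i *ᵥ fun y => t ⟨i, y⟩) x
            + ∑ j ∈ Finset.univ.filter (fun j : Fin N => i < j),
                (C i j *ᵥ fun y => t ⟨j, y⟩) x) := by
      rw [← Finset.sum_filter_add_sum_filter_not Finset.univ (fun j : Fin N => j < i)]
      congr 1
      have hins : Finset.univ.filter (fun j : Fin N => ¬ j < i)
          = insert i (Finset.univ.filter (fun j : Fin N => i < j)) := by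
        ext j
        simp only [Finset.mem_filter, Finset.mem_univ, true_and, Finset.mem_insert]
        constructor
        · intro h
          rcases lt_or_eq_of_le (le_of_not_gt h) with h' | h'
          · exact Or.inr h'
          · exact Or.inl h'.symm
        · rintro (rfl | h)
          · exact lt_irrefl j
          · exact not_lt_of_gt h
      rw [hins, Finset.sum_insert (by simp)]
    rw [hpart]
    ring
  -- final swap of summation order
  have hswap : ∀ (i : Fin N) (x : Fin (b i)),
      (∑ k ∈ Finset.univ.filter (fun k : Fin N => k < i),
        ∑ j ∈ Finset.univ.filter (fun j : Fin N => k < j),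
          (C i k *ᵥ ((C k k)⁻¹ *ᵥ (C k j *ᵥ fun y => t ⟨j, y⟩))) x)
      = ∑ j : Fin N, ∑ k ∈ Finset.univ.filter (fun k : Fin N => k < i ∧ k < j),
          (C i k *ᵥ ((C k k)⁻¹ *ᵥ (C k j *ᵥ fun y => t ⟨j, y⟩))) x := by
    intro i x
    rw [Finset.sum_filter]
    have hstep : ∀ k : Fin N,
        (if k < i then ∑ j ∈ Finset.univ.filter (fun j : Fin N => k < j),
            (C i k *ᵥ ((C k k)⁻¹ *ᵥ (C k j *ᵥ fun y => t ⟨j, y⟩))) x else 0)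
        = ∑ j : Fin N, if k < i ∧ k < j then
            (C i k *ᵥ ((C k k)⁻¹ *ᵥ (C k j *ᵥ fun y => t ⟨j, y⟩))) x else 0 := by
      intro k
      by_cases h : k < i
      · simp [h, Finset.sum_filter]
      · simp [h]
    simp_rw [hstep]
    rw [Finset.sum_comm]
    refine Finset.sum_congr rfl (fun j _ => ?_)
    rw [Finset.sum_filter]
  funext p
  obtain ⟨i, x⟩ := p
  rw [hMt i x, hAt i x, hswap i x]
end
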